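/- arXiv:1404.0628 — 6 statements merged into one kernel-verified Lean document; each statement's English description precedes it below -/
import Mathlib

section
/- Let (M, /, e) be a division structure satisfying L1, L2 and L3. Then M admits a group structure whose multiplication is x * y = x/(e/y), whose identity element is e, and whose inversion is x⁻¹ = e/x; moreover, in this group x * y⁻¹ = x/y for all x, y. -/
/-- A division structure `(M, /, e)` satisfying L1, L2, L3 yields a group
structure on `M` with `x * y = x/(e/y)`, identity `e`, inverse `x⁻¹ = e/x`; moreover in
this group `x * y⁻¹ = x/y`. -/
theorem division_structure_group {M : Type*} (dv : M → M → M) (e : M)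
    (L1 : ∀ x, dv x x = e) (L2 : ∀ x, dv x e = x)
    (L3 : ∀ x y z, dv (dv z x) (dv y x) = dv z y) :
    ∃ G : Group M,
      (∀ x y : M, G.mul x y = dv x (dv e y)) ∧
      G.one = e ∧
      (∀ x : M, G.inv x = dv e x) ∧
      (∀ x y : M, G.mul x (G.inv y) = dv x y) := by
  have A : ∀ x y, dv e (dv y x) = dv x y := by
    intro x y
    have := L3 x y x
    rwa [L1 x] at this
  have B : ∀ x, dv e (dv e x) = x := by
    intro x
    rw [A, L2]
  letI : Mul M := ⟨fun x y => dv x (dv e y)⟩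
  letI : One M := ⟨e⟩
  letI : Inv M := ⟨fun x => dv e x⟩
  have hmul : ∀ x y : M, x * y = dv x (dv e y) := fun _ _ => rfl
  have assoc : ∀ a b c : M, a * b * c = a * (b * c) := by
    intro a b c
    have h1 : dv (dv (dv e c) b) (dv e b) = dv e c := by
      have := L3 b e (dv e c)
      rwa [L2] at this
    have h2 : dv (dv a (dv e b)) (dv (dv (dv e c) b) (dv e b))
        = dv a (dv (dv e c) b) := L3 (dv e b) (dv (dv e c) b) a
    rw [h1] at h2
    simp only [hmul, A]
    exact h2
  have one_mul : ∀ a : M, (1 : M) * a = a := fun a => B a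
  have inv_mul : ∀ a : M, a⁻¹ * a = (1 : M) := by
    intro a
    show dv (dv e a) (dv e a) = e
    exact L1 _
  refine ⟨Group.ofLeftAxioms assoc one_mul inv_mul, fun x y => rfl, rfl, fun x => rfl,
    fun x y => ?_⟩
  show dv x (dv e (dv e y)) = dv x y
  rw [B]
end

section
/- Let M be a type, e ∈ M, and T a ternary relation on M such that: (x, x, e) ∈ T and (e, x, x) ∈ T for all x ∈ M; for all x, y ∈ M there exists z with (x, y, z) ∈ T; if (x, y, z) ∈ T and (x, y, z') ∈ T then z = z'; and for all x, y, z there exist a, b, c with (x, y, a) ∈ T, (x, z, b) ∈ T, (y, z, c) ∈ T and (a, b, c) ∈ T. Then there exists a binary operation / on M such that (x, y, z) ∈ T if and only if z = y/x, and the division structure (M, /, e) satisfies L1, L2 and L3 (hence is a group). -/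
/-- A ternary relation `T` on `M` with the listed properties is the graph of
a binary division `(x, y, z) ∈ T ↔ z = y/x`, and the resulting division structure
`(M, /, e)` satisfies L1, L2, L3 (hence is a group). -/
theorem ternary_relation_gives_division {M : Type*} (e : M) (T : M → M → M → Prop)
    (hTdiag : ∀ x : M, T x x e)
    (hTleft : ∀ x : M, T e x x)
    (hTex : ∀ x y : M, ∃ z : M, T x y z)
    (hTuniq : ∀ x y z z' : M, T x y z → T x y z' → z = z')
    (hTassoc : ∀ x y z : M, ∃ a b c : M, T x y a ∧ T x z b ∧ T y z c ∧ T a b c) :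
    ∃ dv : M → M → M,
      (∀ x y z : M, T x y z ↔ z = dv y x) ∧
      (∀ x, dv x x = e) ∧
      (∀ x, dv x e = x) ∧
      (∀ x y z, dv (dv z x) (dv y x) = dv z y) := by
  refine ⟨fun y x => Classical.choose (hTex x y), fun x y z => ?_, fun x => ?_, fun x => ?_,
    fun x y z => ?_⟩
  · constructor
    · intro h; exact hTuniq x y _ _ h (Classical.choose_spec (hTex x y))
    · intro h; exact h ▸ Classical.choose_spec (hTex x y)
  · exact hTuniq x x _ _ (Classical.choose_spec (hTex x x)) (hTdiag x)
  · exact hTuniq e x _ _ (Classical.choose_spec (hTex e x)) (hTleft x)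
  · obtain ⟨a, b, c, ha, hb, hc, habc⟩ := hTassoc x y z
    have ea := hTuniq x y _ _ (Classical.choose_spec (hTex x y)) ha
    have eb := hTuniq x z _ _ (Classical.choose_spec (hTex x z)) hb
    have ec := hTuniq y z _ _ (Classical.choose_spec (hTex y z)) hc
    beta_reduce
    rw [ea, eb, ec]
    exact hTuniq a b _ _ (Classical.choose_spec (hTex a b)) habc
end

section
/- Let M be a type equipped with a recalage structure (d₀, s₀). Let e ∈ M be the image of the empty tuple under s₀ : M⁰ → M¹, and define x/y := d₀(y, x) using d₀ : M² → M¹. Then the division structure (M, /, e) satisfies L1, L2 and L3; in other words, a recalage of the nerve of the set M endows M with a group structure. -/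
/-- Delete the entry at (0-based) position `i` of an `(n+1)`-tuple.
For 1-based position `i+1`, this is the simplicial face map `d_{i+1}`. -/
def del {M : Type*} {n : ℕ} (i : Fin (n + 1)) (x : Fin (n + 1) → M) : Fin n → M :=
  x ∘ i.succAbove

/-- Repeat the entry at (0-based) position `i` of an `n`-tuple.
For 1-based position `i+1`, this is the simplicial degeneracy map `s_{i+1}`. -/
def rep {M : Type*} {n : ℕ} (i : Fin n) (x : Fin n → M) : Fin (n + 1) → M :=
  x ∘ i.predAbove

/-- The extended family of face maps `M^{n+1} → M^n`: index `0` is the extra map `d0`,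
index `i+1` is the deletion of the `(i+1)`-st (1-based) entry. -/
def face {M : Type*} (d0 : ∀ n : ℕ, (Fin (n + 1) → M) → (Fin n → M)) (n : ℕ)
    (i : Fin (n + 2)) : (Fin (n + 1) → M) → (Fin n → M) :=
  Fin.cases (motive := fun _ => (Fin (n + 1) → M) → (Fin n → M)) (d0 n) (fun j => del j) i

/-- The extended family of degeneracy maps `M^n → M^{n+1}`: index `0` is the extra map
`s0`, index `i+1` repeats the `(i+1)`-st (1-based) entry. -/
def degen {M : Type*} (s0 : ∀ n : ℕ, (Fin n → M) → (Fin (n + 1) → M)) (n : ℕ)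
    (i : Fin (n + 1)) : (Fin n → M) → (Fin (n + 1) → M) :=
  Fin.cases (motive := fun _ => (Fin n → M) → (Fin (n + 1) → M)) (s0 n) (fun j => rep j) i

/-- A recalage structure on a type `M`: maps `d0 : M^n → M^{n-1}` and `s0 : M^n → M^{n+1}`
such that, together with the deletion maps `dᵢ` and repetition maps `sᵢ` (`i ≥ 1`), all
the simplicial identities hold. -/
structure Recalage (M : Type*) where
  d0 : ∀ n : ℕ, (Fin (n + 1) → M) → (Fin n → M)
  s0 : ∀ n : ℕ, (Fin n → M) → (Fin (n + 1) → M)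
  dd : ∀ (n i j : ℕ) (hij : i < j) (hj : j ≤ n + 2),
    face d0 n ⟨i, by omega⟩ ∘ face d0 (n + 1) ⟨j, by omega⟩
      = face d0 n ⟨j - 1, by omega⟩ ∘ face d0 (n + 1) ⟨i, by omega⟩
  ds_lt : ∀ (n i j : ℕ) (hij : i < j) (hj : j ≤ n + 1),
    face d0 (n + 1) ⟨i, by omega⟩ ∘ degen s0 (n + 1) ⟨j, by omega⟩
      = degen s0 n ⟨j - 1, by omega⟩ ∘ face d0 n ⟨i, by omega⟩
  ds_self : ∀ (n j : ℕ) (hj : j ≤ n),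
    face d0 n ⟨j, by omega⟩ ∘ degen s0 n ⟨j, by omega⟩ = id
  ds_succ : ∀ (n j : ℕ) (hj : j ≤ n),
    face d0 n ⟨j + 1, by omega⟩ ∘ degen s0 n ⟨j, by omega⟩ = id
  ds_gt : ∀ (n i j : ℕ) (hij : j + 1 < i) (hi : i ≤ n + 2),
    face d0 (n + 1) ⟨i, by omega⟩ ∘ degen s0 (n + 1) ⟨j, by omega⟩
      = degen s0 n ⟨j, by omega⟩ ∘ face d0 n ⟨i - 1, by omega⟩
  ss : ∀ (n i j : ℕ) (hij : i ≤ j) (hj : j ≤ n),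
    degen s0 (n + 1) ⟨i, by omega⟩ ∘ degen s0 n ⟨j, by omega⟩
      = degen s0 (n + 1) ⟨j + 1, by omega⟩ ∘ degen s0 n ⟨i, by omega⟩
/-- A recalage structure on `M` endows `M` with a group structure:
with `e := s₀()` (the image of the empty tuple) and `x/y := d₀(y, x)`, the division
structure `(M, /, e)` satisfies L1, L2 and L3. -/
theorem recalage_gives_group {M : Type*} (R : Recalage M) :
    let e : M := R.s0 0 Fin.elim0 0
    let dv : M → M → M := fun x y => R.d0 1 ![y, x] 0
    (∀ x : M, dv x x = e) ∧
    (∀ x : M, dv x e = x) ∧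
    (∀ x y z : M, dv (dv z x) (dv y x) = dv z y) := by
  intro e dv
  -- L1
  have L1 : ∀ x : M, dv x x = e := by
    intro x
    have h := congrFun (congrFun (R.ds_lt 0 0 1 (by omega) (by omega)) ![x]) 0
    simp only [Function.comp_apply] at h
    have h1 : (degen R.s0 1 ⟨1, by omega⟩) ![x] = ![x, x] := by
      show rep (⟨0, by omega⟩ : Fin 1) ![x] = ![x, x]
      funext i
      fin_cases i <;> rfl
    have h2 : (face R.d0 0 ⟨0, by omega⟩) ![x] = Fin.elim0 := by
      funext i; exact i.elim0
    rw [h1, h2] at h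
    exact h
  -- s0 1 ![x] = ![e, x]
  have hs : ∀ x : M, R.s0 1 ![x] = ![e, x] := by
    intro x
    have h0 : R.s0 1 ![x] 0 = e := by
      have h := congrFun (congrFun (R.ds_gt 0 2 0 (by omega) (by omega)) ![x]) 0
      simp only [Function.comp_apply] at h
      have hl : (face R.d0 1 ⟨2, by omega⟩) (R.s0 1 ![x]) 0 = R.s0 1 ![x] 0 := rfl
      have hr : (degen R.s0 0 ⟨0, by omega⟩) ((face R.d0 0 ⟨1, by omega⟩) ![x]) 0 = e := by
        show R.s0 0 (del (0 : Fin 1) ![x]) 0 = e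
        have : del (0 : Fin 1) ![x] = (Fin.elim0 : Fin 0 → M) := by
          funext i; exact i.elim0
        rw [this]
      exact hr ▸ hl ▸ h
    have h1 : R.s0 1 ![x] 1 = x := by
      have h := congrFun (congrFun (R.ds_succ 1 0 (by omega)) ![x]) 0
      simp only [Function.comp_apply, id_eq] at h
      have hl : (face R.d0 1 ⟨1, by omega⟩) ((degen R.s0 1 ⟨0, by omega⟩) ![x]) 0
          = R.s0 1 ![x] 1 := rfl
      rw [hl] at h
      exact h
    funext i
    fin_cases i
    · exact h0
    · exact h1
  refine ⟨L1, ?_, ?_⟩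
  -- L2
  · intro x
    have h := congrFun (congrFun (R.ds_self 1 0 (by omega)) ![x]) 0
    simp only [Function.comp_apply, id_eq] at h
    have : (face R.d0 1 ⟨0, by omega⟩) ((degen R.s0 1 ⟨0, by omega⟩) ![x]) = R.d0 1 ![e, x] := by
      show R.d0 1 (R.s0 1 ![x]) = R.d0 1 ![e, x]
      rw [hs x]
    rw [this] at h
    exact h
  -- L3
  · intro x y z
    -- components of d0 2 ![x,y,z]
    have c1 : R.d0 2 ![x, y, z] 1 = dv z x := by
      have h := congrFun (congrFun (R.dd 1 0 2 (by omega) (by omega)) ![x, y, z]) 0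
      simp only [Function.comp_apply] at h
      have hl : (face R.d0 1 ⟨0, by omega⟩) ((face R.d0 2 ⟨2, by omega⟩) ![x, y, z]) 0
          = R.d0 1 ![x, z] 0 := by
        have : (face R.d0 2 ⟨2, by omega⟩) ![x, y, z] = ![x, z] := by
          show del (⟨1, by omega⟩ : Fin 3) ![x, y, z] = ![x, z]
          funext i; fin_cases i <;> rfl
        rw [this]; rfl
      have hr : (face R.d0 1 ⟨1, by omega⟩) ((face R.d0 2 ⟨0, by omega⟩) ![x, y, z]) 0
          = R.d0 2 ![x, y, z] 1 := rfl
      rw [hl, hr] at h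
      exact h.symm
    have c0 : R.d0 2 ![x, y, z] 0 = dv y x := by
      have h := congrFun (congrFun (R.dd 1 0 3 (by omega) (by omega)) ![x, y, z]) 0
      simp only [Function.comp_apply] at h
      have hl : (face R.d0 1 ⟨0, by omega⟩) ((face R.d0 2 ⟨3, by omega⟩) ![x, y, z]) 0
          = R.d0 1 ![x, y] 0 := by
        have : (face R.d0 2 ⟨3, by omega⟩) ![x, y, z] = ![x, y] := by
          show del (⟨2, by omega⟩ : Fin 3) ![x, y, z] = ![x, y]
          funext i; fin_cases i <;> rfl
        rw [this]; rfl
      have hr : (face R.d0 1 ⟨2, by omega⟩) ((face R.d0 2 ⟨0, by omega⟩) ![x, y, z]) 0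
          = R.d0 2 ![x, y, z] 0 := rfl
      rw [hl, hr] at h
      exact h.symm
    have hd02 : R.d0 2 ![x, y, z] = ![dv y x, dv z x] := by
      funext i; fin_cases i
      · exact c0
      · exact c1
    have h := congrFun (congrFun (R.dd 1 0 1 (by omega) (by omega)) ![x, y, z]) 0
    simp only [Function.comp_apply] at h
    have hl : (face R.d0 1 ⟨0, by omega⟩) ((face R.d0 2 ⟨1, by omega⟩) ![x, y, z]) 0
        = R.d0 1 ![y, z] 0 := by
      have : (face R.d0 2 ⟨1, by omega⟩) ![x, y, z] = ![y, z] := by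
        show del (⟨0, by omega⟩ : Fin 3) ![x, y, z] = ![y, z]
        funext i; fin_cases i <;> rfl
      rw [this]; rfl
    have hr : (face R.d0 1 ⟨0, by omega⟩) ((face R.d0 2 ⟨0, by omega⟩) ![x, y, z]) 0
        = dv (dv z x) (dv y x) := by
      show R.d0 1 (R.d0 2 ![x, y, z]) 0 = dv (dv z x) (dv y x)
      rw [hd02]
    rw [hl, hr] at h
    exact h.symm
end

section
/- Let H be a category equipped with a semitriangulated structure. Given morphisms f : X → Y, g : Y → Z, p : Y → D, q : Z → F and r : Z → E such that (f, p), (g, r) and (g ∘ f, q) are triangles, there exist morphisms u : D → E and v : E → F such that (u, v) is a triangle, u ∘ p = r ∘ g, and v ∘ r = q. -/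
open CategoryTheory

/-- A semitriangulated structure on a (nonempty) category `H`: a collection of composable
pairs of morphisms, called triangles, and a collection of objects, called vertices,
subject to axioms S0–S4. -/
structure Semitriangulated (H : Type*) [Category H] where
  nonempty : Nonempty H
  IsTriangle : ∀ {X Y Z : H}, (X ⟶ Y) → (Y ⟶ Z) → Prop
  IsVertex : H → Prop
  /-- S0: triangles are closed under isomorphism. -/
  S0_triangle : ∀ {X Y Z X' Y' Z' : H} (f : X ⟶ Y) (g : Y ⟶ Z)
      (α : X ≅ X') (β : Y ≅ Y') (γ : Z ≅ Z'),
      IsTriangle f g → IsTriangle (α.inv ≫ f ≫ β.hom) (β.inv ≫ g ≫ γ.hom)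
  /-- S0: vertices are closed under isomorphism. -/
  S0_vertex_iso : ∀ {V V' : H}, IsVertex V → (V ≅ V') → IsVertex V'
  /-- S0: all vertices are isomorphic to each other. -/
  S0_vertex_unique : ∀ {V V' : H}, IsVertex V → IsVertex V' → Nonempty (V ≅ V')
  /-- S1: triangle `(id_X, X → V)` with `V` a vertex. -/
  S1_left : ∀ X : H, ∃ (V : H) (g : X ⟶ V), IsVertex V ∧ IsTriangle (𝟙 X) g
  /-- S1: triangle `(V → X, id_X)` with `V` a vertex. -/
  S1_right : ∀ X : H, ∃ (V : H) (f : V ⟶ X), IsVertex V ∧ IsTriangle f (𝟙 X)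
  /-- S2: any morphism fits into a triangle. -/
  S2 : ∀ {X Y : H} (f : X ⟶ Y), ∃ (Z : H) (g : Y ⟶ Z), IsTriangle f g
  /-- S3: the octahedron-style axiom for a composable pair. -/
  S3 : ∀ {X Y Z : H} (f : X ⟶ Y) (g : Y ⟶ Z),
      ∃ (A B C : H) (a : Y ⟶ A) (b : Z ⟶ B) (c : Z ⟶ C) (p : A ⟶ B) (q : B ⟶ C),
        IsTriangle f a ∧ IsTriangle g b ∧ IsTriangle (f ≫ g) c ∧ IsTriangle p q ∧
        a ≫ p = g ≫ b ∧ b ≫ q = c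
  /-- S4: morphisms of partial triangles extend, isomorphically if possible. -/
  S4 : ∀ {A B C D E F : H} (f : A ⟶ B) (g : B ⟶ C) (f' : D ⟶ E) (g' : E ⟶ F)
      (u : A ⟶ D) (v : B ⟶ E), IsTriangle f g → IsTriangle f' g' →
      f ≫ v = u ≫ f' →
      (∃ w : C ⟶ F, g ≫ w = v ≫ g') ∧
      (IsIso u → IsIso v → ∃ w : C ⟶ F, g ≫ w = v ≫ g' ∧ IsIso w)
/-- the strengthened octahedron in a semitriangulated category: given
triangles `(f, p)`, `(g, r)` and `(g ∘ f, q)`, there exist `u : D ⟶ E` and `v : E ⟶ F`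
such that `(u, v)` is a triangle, `u ∘ p = r ∘ g` and `v ∘ r = q`. -/
theorem semitriangulated_strong_octahedron {H : Type*} [Category H]
    (T : Semitriangulated H) {X Y Z D E F : H}
    (f : X ⟶ Y) (g : Y ⟶ Z) (p : Y ⟶ D) (q : Z ⟶ F) (r : Z ⟶ E)
    (h1 : T.IsTriangle f p) (h2 : T.IsTriangle g r) (h3 : T.IsTriangle (f ≫ g) q) :
    ∃ (u : D ⟶ E) (v : E ⟶ F),
      T.IsTriangle u v ∧ p ≫ u = g ≫ r ∧ r ≫ v = q := by

  obtain ⟨A, B, C, a, b, c, P, Q, ta, tb, tc, tPQ, hcomm1, hcomm2⟩ := T.S3 f g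
  -- iso D ≅ A
  obtain ⟨φ, hφ, hφi⟩ := (T.S4 f p f a (𝟙 X) (𝟙 Y) h1 ta (by simp)).2 inferInstance inferInstance
  obtain ⟨β, hβ, hβi⟩ := (T.S4 g r g b (𝟙 Y) (𝟙 Z) h2 tb (by simp)).2 inferInstance inferInstance
  obtain ⟨γ, hγ, hγi⟩ := (T.S4 (f ≫ g) q (f ≫ g) c (𝟙 X) (𝟙 Z) h3 tc (by simp)).2
    inferInstance inferInstance
  simp only [Category.id_comp] at hφ hβ hγ
  haveI := hφi; haveI := hβi; haveI := hγi
  refine ⟨φ ≫ P ≫ inv β, β ≫ Q ≫ inv γ, ?_, ?_, ?_⟩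
  · have := T.S0_triangle P Q (asIso φ).symm (asIso β).symm (asIso γ).symm tPQ
    simpa using this
  · rw [← Category.assoc, hφ, ← Category.assoc, hcomm1, ← hβ]; simp
  · rw [← Category.assoc, hβ, ← Category.assoc, hcomm2, ← hγ]; simp
end

section
/- Let R be a ring. For every chain map x : C → X of cochain complexes of R-modules, the family Y(x) is a 3-complex: the composite of any three consecutive differentials of Y(x) is zero. -/
/-- A ℤ-indexed family of `R`-modules together with degree `+1` linear maps
(the common underlying datum of `N`-complexes for all `N`). -/
structure ZSys (R : Type) [Ring R] where
  X : ℤ → Type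
  [gr : ∀ i, AddCommGroup (X i)]
  [mo : ∀ i, Module R (X i)]
  d : ∀ i : ℤ, X i →ₗ[R] X (i + 1)

attribute [instance] ZSys.gr ZSys.mo

variable {R : Type} [Ring R]

/-- Transport along an equality of degrees. -/
def ZSys.cast (W : ZSys R) {i j : ℤ} (h : i = j) : W.X i →ₗ[R] W.X j := by
  subst h; exact LinearMap.id

/-- The composite of `k` consecutive differentials, `W.X i →ₗ W.X (i + k)`. -/
def ZSys.dpow (W : ZSys R) : (k : ℕ) → (i : ℤ) → (W.X i →ₗ[R] W.X (i + (k : ℤ)))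
  | 0, i => W.cast (by simp)
  | k + 1, i => W.cast (by push_cast; ring) ∘ₗ W.dpow k (i + 1) ∘ₗ W.d i

/-- `W` is an `N`-complex: the composite of any `N` consecutive differentials is zero. -/
def IsNComplex (N : ℕ) (W : ZSys R) : Prop := ∀ i : ℤ, W.dpow N i = 0

/-- A morphism of such systems (in particular, of `N`-complexes): a family of linear maps
commuting with the differentials. -/
def IsChainMap (V W : ZSys R) (f : ∀ i : ℤ, V.X i →ₗ[R] W.X i) : Prop :=
  ∀ i : ℤ, W.d i ∘ₗ f i = f (i + 1) ∘ₗ V.d i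

/-- `h` is a homotopy from `f` to `g` (morphisms of `N`-complexes `V → W`):
`g - f = Σ_{j=1}^{N} d^{N-j} ∘ h ∘ d^{j-1}` in every degree. -/
def IsHomotopy (N : ℕ) (V W : ZSys R) (f g : ∀ i : ℤ, V.X i →ₗ[R] W.X i)
    (h : ∀ i : ℤ, V.X (i + (N : ℤ) - 1) →ₗ[R] W.X i) : Prop :=
  ∀ i : ℤ, g i - f i =
    ∑ j : Fin N,
      W.cast (show (i + ((j : ℕ) : ℤ) - (N : ℤ) + 1) + ((N - 1 - (j : ℕ) : ℕ) : ℤ) = i by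
          have hj := j.isLt; omega) ∘ₗ
        W.dpow (N - 1 - (j : ℕ)) (i + ((j : ℕ) : ℤ) - (N : ℤ) + 1) ∘ₗ
        h (i + ((j : ℕ) : ℤ) - (N : ℤ) + 1) ∘ₗ
        V.cast (show i + ((j : ℕ) : ℤ) = (i + ((j : ℕ) : ℤ) - (N : ℤ) + 1) + (N : ℤ) - 1 by
          ring) ∘ₗ
        V.dpow (j : ℕ) i

/-- Homotopy equivalence of `N`-complexes `W` and `V`: morphisms `f : W → V` and
`g : V → W` with `g ∘ f` homotopic to `id_W` and `f ∘ g` homotopic to `id_V`. -/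
def HomotopyEquivN (N : ℕ) (W V : ZSys R) : Prop :=
  ∃ (f : ∀ i : ℤ, W.X i →ₗ[R] V.X i) (g : ∀ i : ℤ, V.X i →ₗ[R] W.X i),
    IsChainMap W V f ∧ IsChainMap V W g ∧
    (∃ h, IsHomotopy N W W (fun i => g i ∘ₗ f i) (fun _ => LinearMap.id) h) ∧
    (∃ h, IsHomotopy N V V (fun i => f i ∘ₗ g i) (fun _ => LinearMap.id) h)
/-- The family `Y(x)` associated with a chain map `x : C → X` of cochain complexes:
`Y^{3k} = C^{2k} ⊕ X^{2k}`, `Y^{3k+1} = C^{2k+1} ⊕ X^{2k}`, `Y^{3k+2} = C^{2k+2} ⊕ X^{2k+1}`,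
with differentials `[[d,0],[0,1]]`, `[[−d,0],[x,d]]` and `[[−1,0],[x,d]]` respectively. -/
def Ysys (C Xc : ZSys R) (x : ∀ i : ℤ, C.X i →ₗ[R] Xc.X i) : ZSys R where
  X i := C.X (i - i / 3) × Xc.X ((2 * i) / 3)
  gr i := by infer_instance
  mo i := by infer_instance
  d i :=
    if h0 : i % 3 = 0 then
      -- `[[d, 0], [0, 1]] : C^{2k} ⊕ X^{2k} → C^{2k+1} ⊕ X^{2k}`
      LinearMap.prod
        (C.cast (show i - i / 3 + 1 = (i + 1) - (i + 1) / 3 by omega) ∘ₗ C.d (i - i / 3)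
          ∘ₗ LinearMap.fst R (C.X (i - i / 3)) (Xc.X ((2 * i) / 3)))
        (Xc.cast (show (2 * i) / 3 = (2 * (i + 1)) / 3 by omega)
          ∘ₗ LinearMap.snd R (C.X (i - i / 3)) (Xc.X ((2 * i) / 3)))
    else if h1 : i % 3 = 1 then
      -- `[[−d, 0], [x, d]] : C^{2k+1} ⊕ X^{2k} → C^{2k+2} ⊕ X^{2k+1}`
      LinearMap.prod
        (-(C.cast (show i - i / 3 + 1 = (i + 1) - (i + 1) / 3 by omega) ∘ₗ C.d (i - i / 3)
          ∘ₗ LinearMap.fst R (C.X (i - i / 3)) (Xc.X ((2 * i) / 3))))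
        (Xc.cast (show i - i / 3 = (2 * (i + 1)) / 3 by omega) ∘ₗ x (i - i / 3)
            ∘ₗ LinearMap.fst R (C.X (i - i / 3)) (Xc.X ((2 * i) / 3))
          + Xc.cast (show (2 * i) / 3 + 1 = (2 * (i + 1)) / 3 by omega) ∘ₗ Xc.d ((2 * i) / 3)
            ∘ₗ LinearMap.snd R (C.X (i - i / 3)) (Xc.X ((2 * i) / 3)))
    else
      -- `[[−1, 0], [x, d]] : C^{2k+2} ⊕ X^{2k+1} → C^{2k+2} ⊕ X^{2k+2}`
      LinearMap.prod
        (-(C.cast (show i - i / 3 = (i + 1) - (i + 1) / 3 by omega)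
          ∘ₗ LinearMap.fst R (C.X (i - i / 3)) (Xc.X ((2 * i) / 3))))
        (Xc.cast (show i - i / 3 = (2 * (i + 1)) / 3 by omega) ∘ₗ x (i - i / 3)
            ∘ₗ LinearMap.fst R (C.X (i - i / 3)) (Xc.X ((2 * i) / 3))
          + Xc.cast (show (2 * i) / 3 + 1 = (2 * (i + 1)) / 3 by omega) ∘ₗ Xc.d ((2 * i) / 3)
            ∘ₗ LinearMap.snd R (C.X (i - i / 3)) (Xc.X ((2 * i) / 3)))


@[simp] lemma ZSys.cast_refl (W : ZSys R) {i : ℤ} (h : i = i) (v : W.X i) : W.cast h v = v := rfl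

@[simp] lemma ZSys.cast_cast (W : ZSys R) {i j k : ℤ} (h1 : i = j) (h2 : j = k) (v : W.X i) :
    W.cast h2 (W.cast h1 v) = W.cast (h1.trans h2) v := by subst h1; subst h2; rfl

@[simp] lemma ZSys.cast_eq_zero (W : ZSys R) {i j : ℤ} (h : i = j) (v : W.X i) :
    W.cast h v = 0 ↔ v = 0 := by subst h; exact Iff.rfl

lemma ZSys.d_cast (W : ZSys R) {i j : ℤ} (h : i = j) (v : W.X i) :
    W.d j (W.cast h v) = W.cast (by rw [h]) (W.d i v) := by subst h; rfl

lemma fam_cast {V W : ZSys R} (f : ∀ i : ℤ, V.X i →ₗ[R] W.X i) {i j : ℤ} (h : i = j)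
    (v : V.X i) : f j (V.cast h v) = W.cast h (f i v) := by subst h; rfl

lemma dd_zero (W : ZSys R) (hW : IsNComplex 2 W) (i : ℤ) (v : W.X i) :
    W.d (i + 1) (W.d i v) = 0 := by
  have h := LinearMap.congr_fun (hW i) v
  simp only [ZSys.dpow, LinearMap.comp_apply, ZSys.cast_cast, ZSys.cast_eq_zero,
    LinearMap.zero_apply] at h
  exact h

@[simp] lemma ZSys.cast_zero (W : ZSys R) {i j : ℤ} (h : i = j) : W.cast h 0 = 0 :=
  map_zero _

lemma IsChainMap.apply {V W : ZSys R} {f : ∀ i : ℤ, V.X i →ₗ[R] W.X i}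
    (hf : IsChainMap V W f) (i : ℤ) (v : V.X i) :
    W.d i (f i v) = f (i + 1) (V.d i v) := LinearMap.congr_fun (hf i) v
lemma Ysys_d_mod0 (C Xc : ZSys R) (x : ∀ i : ℤ, C.X i →ₗ[R] Xc.X i) (i : ℤ) (h : i % 3 = 0)
    (c : C.X (i - i / 3)) (w : Xc.X ((2 * i) / 3)) :
    (Ysys C Xc x).d i (c, w) =
      ((C.cast (show i - i / 3 + 1 = (i + 1) - (i + 1) / 3 by omega) (C.d (i - i / 3) c),
        Xc.cast (show (2 * i) / 3 = (2 * (i + 1)) / 3 by omega) w) :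
        C.X ((i + 1) - (i + 1) / 3) × Xc.X ((2 * (i + 1)) / 3)) := by
  simp only [Ysys, h, reduceDIte]; rfl

lemma Ysys_d_mod1 (C Xc : ZSys R) (x : ∀ i : ℤ, C.X i →ₗ[R] Xc.X i) (i : ℤ) (h : i % 3 = 1)
    (c : C.X (i - i / 3)) (w : Xc.X ((2 * i) / 3)) :
    (Ysys C Xc x).d i (c, w) =
      ((-(C.cast (show i - i / 3 + 1 = (i + 1) - (i + 1) / 3 by omega) (C.d (i - i / 3) c)),
        Xc.cast (show i - i / 3 = (2 * (i + 1)) / 3 by omega) (x (i - i / 3) c)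
          + Xc.cast (show (2 * i) / 3 + 1 = (2 * (i + 1)) / 3 by omega) (Xc.d ((2 * i) / 3) w)) :
        C.X ((i + 1) - (i + 1) / 3) × Xc.X ((2 * (i + 1)) / 3)) := by
  simp only [Ysys, h, reduceDIte, Int.reduceEq]; rfl

lemma Ysys_d_mod2 (C Xc : ZSys R) (x : ∀ i : ℤ, C.X i →ₗ[R] Xc.X i) (i : ℤ) (h : i % 3 = 2)
    (c : C.X (i - i / 3)) (w : Xc.X ((2 * i) / 3)) :
    (Ysys C Xc x).d i (c, w) =
      ((-(C.cast (show i - i / 3 = (i + 1) - (i + 1) / 3 by omega) c),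
        Xc.cast (show i - i / 3 = (2 * (i + 1)) / 3 by omega) (x (i - i / 3) c)
          + Xc.cast (show (2 * i) / 3 + 1 = (2 * (i + 1)) / 3 by omega) (Xc.d ((2 * i) / 3) w)) :
        C.X ((i + 1) - (i + 1) / 3) × Xc.X ((2 * (i + 1)) / 3)) := by
  simp only [Ysys, h, reduceDIte, Int.reduceEq]; rfl

/-- for every chain map `x : C → X` of cochain complexes of `R`-modules,
the family `Y(x)` is a 3-complex. -/
theorem Ysys_isThreeComplex (R : Type) [Ring R] (C Xc : ZSys R)
    (hC : IsNComplex 2 C) (hX : IsNComplex 2 Xc)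
    (x : ∀ i : ℤ, C.X i →ₗ[R] Xc.X i) (hx : IsChainMap C Xc x) :
    IsNComplex 3 (Ysys C Xc x) := by
  intro i
  apply LinearMap.ext
  intro v
  simp only [ZSys.dpow, LinearMap.comp_apply, LinearMap.zero_apply,
    ZSys.cast_cast, ZSys.cast_eq_zero]
  obtain ⟨c, w⟩ := v
  rcases (show i % 3 = 0 ∨ i % 3 = 1 ∨ i % 3 = 2 by omega) with h | h | h <;>
  · first
    | (have h1 : (i+1) % 3 = 1 := by omega
       have h2 : (i+1+1) % 3 = 2 := by omega)
    | (have h1 : (i+1) % 3 = 2 := by omega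
       have h2 : (i+1+1) % 3 = 0 := by omega)
    | (have h1 : (i+1) % 3 = 0 := by omega
       have h2 : (i+1+1) % 3 = 1 := by omega)
    simp only [Ysys_d_mod0, Ysys_d_mod1, Ysys_d_mod2, h, h1, h2, reduceDIte, dite_eq_ite, reduceIte, reduceCtorEq, Int.reduceEq,
      LinearMap.prod_apply, LinearMap.comp_apply, LinearMap.fst_apply, LinearMap.snd_apply,
      LinearMap.neg_apply, LinearMap.add_apply, Pi.prod, map_add, map_neg,
      ZSys.d_cast, fam_cast, hx.apply, ZSys.cast_cast, ZSys.cast_zero, ZSys.cast_eq_zero,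
      dd_zero C hC, dd_zero Xc hX, map_zero, neg_zero, add_zero, zero_add, neg_neg, neg_add_cancel, add_neg_cancel,
      Prod.mk_eq_zero, and_self, Prod.mk.injEq, Prod.mk_zero_zero]
    rfl
end

section
/- Let (M, /, e) be a division structure satisfying L1, L2 and L3. Then the operation x * y := x/(e/y) is associative: (x/(e/y))/(e/z) = x/(e/(y/(e/z))) for all x, y, z ∈ M. -/
/-- In a division structure satisfying L1, L2 and L3, the operation
`x * y := x/(e/y)` is associative. -/
theorem division_structure_mul_assoc {M : Type*} (dv : M → M → M) (e : M)
    (L1 : ∀ x, dv x x = e) (L2 : ∀ x, dv x e = x)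
    (L3 : ∀ x y z, dv (dv z x) (dv y x) = dv z y) :
    ∀ x y z : M, dv (dv x (dv e y)) (dv e z) = dv x (dv e (dv y (dv e z))) := by
  intro x y z
  have B : ∀ a b, dv e (dv a b) = dv b a := by
    intro a b
    have h := L3 b a b
    rwa [L1 b] at h
  have h1 : dv (dv (dv e z) y) (dv e y) = dv e z := by
    have h := L3 y e (dv e z)
    rwa [L2] at h
  have h2 := L3 (dv e y) (dv (dv e z) y) x
  rw [h1] at h2
  rw [B y (dv e z)]; exact h2
end
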